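/- arXiv:2104.12220 — 4 statements merged into one kernel-verified Lean document; each statement's English description precedes it below -/
import Mathlib

section
/- Let β > 0, f ∈ 𝓑^β, u ∈ H^∞(𝔻) non-vanishing with fu ∈ 𝓑^β, and α > 1 a real number. Then f·u^α ∈ 𝓑^β, where u^α is defined via a branch of the logarithm of u, with the estimate ‖fu^α‖_{𝓑^β} ≤ ‖u‖_∞^α ‖f‖_{𝓑^β} + α‖u‖_∞^{α−1}‖fu‖_{𝓑^β} + (α−1)‖u‖_∞^α ‖f‖_{𝓑^β}. -/
/-- The Bloch-type seminorm `sup_{z ∈ 𝔻} (1 - |z|²)^β |f'(z)|`. -/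
noncomputable def blochSemi (β : ℝ) (f : ℂ → ℂ) : ℝ :=
  ⨆ z : Metric.ball (0:ℂ) 1, (1 - ‖(z : ℂ)‖ ^ 2) ^ β * ‖deriv f (z : ℂ)‖

/-- The Bloch-type norm `|f(0)| + sup_{z ∈ 𝔻} (1 - |z|²)^β |f'(z)|`. -/
noncomputable def blochNorm (β : ℝ) (f : ℂ → ℂ) : ℝ := ‖f 0‖ + blochSemi β f

/-- The sup norm `‖u‖_∞ = sup_{z ∈ 𝔻} |u(z)|`. -/
noncomputable def supNorm (u : ℂ → ℂ) : ℝ := ⨆ z : Metric.ball (0:ℂ) 1, ‖u (z : ℂ)‖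

/-- Membership in the Bloch-type space `𝓑^β`. -/
def MemBloch (β : ℝ) (f : ℂ → ℂ) : Prop :=
  DifferentiableOn ℂ f (Metric.ball 0 1) ∧
    BddAbove (Set.range fun z : Metric.ball (0:ℂ) 1 =>
      (1 - ‖(z : ℂ)‖ ^ 2) ^ β * ‖deriv f (z : ℂ)‖)

theorem stmt_9 (β : ℝ) (hβ : 0 < β) (f u L : ℂ → ℂ)
    (hf : MemBloch β f)
    (hu : DifferentiableOn ℂ u (Metric.ball 0 1))
    (hubdd : BddAbove (Set.range fun z : Metric.ball (0:ℂ) 1 => ‖u (z : ℂ)‖))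
    (hune : ∀ z ∈ Metric.ball (0:ℂ) 1, u z ≠ 0)
    (hL : DifferentiableOn ℂ L (Metric.ball 0 1))
    (hLu : ∀ z ∈ Metric.ball (0:ℂ) 1, Complex.exp (L z) = u z)
    (hfu : MemBloch β (fun z => f z * u z))
    (α : ℝ) (hα : 1 < α) :
    MemBloch β (fun z => f z * Complex.exp ((α : ℂ) * L z)) ∧
      blochNorm β (fun z => f z * Complex.exp ((α : ℂ) * L z)) ≤
        supNorm u ^ α * blochNorm β f
          + α * supNorm u ^ (α - 1) * blochNorm β (fun z => f z * u z)
          + (α - 1) * supNorm u ^ α * blochNorm β f := by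
  have hball : IsOpen (Metric.ball (0:ℂ) 1) := Metric.isOpen_ball
  have h0 : (0:ℂ) ∈ Metric.ball (0:ℂ) 1 := by simp
  haveI : Nonempty (Metric.ball (0:ℂ) 1) := ⟨⟨0, h0⟩⟩
  set M := supNorm u with hMdef
  have huM : ∀ z ∈ Metric.ball (0:ℂ) 1, ‖u z‖ ≤ M := fun z hz =>
    le_ciSup hubdd (⟨z, hz⟩ : Metric.ball (0:ℂ) 1)
  have hM0 : 0 ≤ M := le_trans (norm_nonneg _) (huM 0 h0)
  have hα0 : (0:ℝ) < α := lt_trans one_pos hα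
  -- exp bound
  have hexp : ∀ c : ℝ, 0 ≤ c → ∀ z ∈ Metric.ball (0:ℂ) 1,
      ‖Complex.exp ((c:ℂ) * L z)‖ ≤ M ^ c := by
    intro c hc z hz
    have hz' : ‖u z‖ = Real.exp (L z).re := by
      rw [← hLu z hz, Complex.norm_exp]
    have h1 : ‖Complex.exp ((c:ℂ) * L z)‖ = ‖u z‖ ^ c := by
      rw [Complex.norm_exp, Complex.re_ofReal_mul, hz',
        mul_comm, Real.exp_mul]
    rw [h1]
    exact Real.rpow_le_rpow (norm_nonneg _) (huM z hz) hc
  -- differentiability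
  have hfd : ∀ z ∈ Metric.ball (0:ℂ) 1, DifferentiableAt ℂ f z := fun z hz =>
    (hf.1 z hz).differentiableAt (hball.mem_nhds hz)
  have hud : ∀ z ∈ Metric.ball (0:ℂ) 1, DifferentiableAt ℂ u z := fun z hz =>
    (hu z hz).differentiableAt (hball.mem_nhds hz)
  have hLd : ∀ z ∈ Metric.ball (0:ℂ) 1, DifferentiableAt ℂ L z := fun z hz =>
    (hL z hz).differentiableAt (hball.mem_nhds hz)
  have hderu : ∀ z ∈ Metric.ball (0:ℂ) 1,
      deriv u z = Complex.exp (L z) * deriv L z := by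
    intro z hz
    have hev : u =ᶠ[nhds z] fun w => Complex.exp (L w) :=
      Filter.eventuallyEq_of_mem (hball.mem_nhds hz) fun w hw => (hLu w hw).symm
    rw [hev.deriv_eq, deriv_cexp (hLd z hz)]
  -- derivative formula for g
  have hderg : ∀ z ∈ Metric.ball (0:ℂ) 1,
      deriv (fun w => f w * Complex.exp ((α:ℂ) * L w)) z
        = (α:ℂ) * Complex.exp (((α:ℂ) - 1) * L z) * deriv (fun w => f w * u w) z
          + (1 - (α:ℂ)) * Complex.exp ((α:ℂ) * L z) * deriv f z := by
    intro z hz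
    have hfz := hfd z hz
    have huz := hud z hz
    have hLz := hLd z hz
    have hEz : DifferentiableAt ℂ (fun w => Complex.exp ((α:ℂ) * L w)) z :=
      (hLz.const_mul _).cexp
    have h1 : deriv (fun w => f w * Complex.exp ((α:ℂ) * L w)) z
        = deriv f z * Complex.exp ((α:ℂ) * L z)
          + f z * (Complex.exp ((α:ℂ) * L z) * ((α:ℂ) * deriv L z)) := by
      rw [deriv_fun_mul hfz hEz, deriv_cexp (hLz.const_mul _), deriv_const_mul _ hLz]
    have h2 : deriv (fun w => f w * u w) z = deriv f z * u z + f z * deriv u z :=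
      deriv_fun_mul hfz huz
    have h3 : deriv u z = Complex.exp (L z) * deriv L z := hderu z hz
    have h4 : u z = Complex.exp (L z) := (hLu z hz).symm
    have h5 : Complex.exp (((α:ℂ) - 1) * L z) * Complex.exp (L z)
        = Complex.exp ((α:ℂ) * L z) := by
      rw [← Complex.exp_add]; ring_nf
    rw [h1, h2, h3, h4, ← h5]; ring
  -- seminorm pieces
  set S1 := blochSemi β (fun z => f z * u z) with hS1def
  set S2 := blochSemi β f with hS2def
  have hS1le : ∀ z : Metric.ball (0:ℂ) 1,
      (1 - ‖(z:ℂ)‖ ^ 2) ^ β * ‖deriv (fun w => f w * u w) (z:ℂ)‖ ≤ S1 := fun z =>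
    le_ciSup hfu.2 z
  have hS2le : ∀ z : Metric.ball (0:ℂ) 1,
      (1 - ‖(z:ℂ)‖ ^ 2) ^ β * ‖deriv f (z:ℂ)‖ ≤ S2 := fun z => le_ciSup hf.2 z
  have hwpos : ∀ z : Metric.ball (0:ℂ) 1, 0 ≤ (1 - ‖(z:ℂ)‖ ^ 2) ^ β := by
    intro ⟨z, hz⟩
    have : ‖z‖ < 1 := mem_ball_zero_iff.mp hz
    exact Real.rpow_nonneg (by nlinarith [norm_nonneg z]) β
  have hS1nn : 0 ≤ S1 :=
    le_trans (mul_nonneg (hwpos ⟨0, h0⟩) (norm_nonneg _)) (hS1le ⟨0, h0⟩)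
  have hS2nn : 0 ≤ S2 :=
    le_trans (mul_nonneg (hwpos ⟨0, h0⟩) (norm_nonneg _)) (hS2le ⟨0, h0⟩)
  have hMα : 0 ≤ M ^ α := Real.rpow_nonneg hM0 α
  have hMα1 : 0 ≤ M ^ (α - 1) := Real.rpow_nonneg hM0 (α - 1)
  -- pointwise bound
  have hC : ∀ z : Metric.ball (0:ℂ) 1,
      (1 - ‖(z:ℂ)‖ ^ 2) ^ β * ‖deriv (fun w => f w * Complex.exp ((α:ℂ) * L w)) (z:ℂ)‖
        ≤ α * M ^ (α - 1) * S1 + (α - 1) * M ^ α * S2 := by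
    intro z
    obtain ⟨z, hz⟩ := z
    have hw : 0 ≤ (1 - ‖z‖ ^ 2) ^ β := hwpos ⟨z, hz⟩
    have hA : ‖Complex.exp (((α:ℂ) - 1) * L z)‖ ≤ M ^ (α - 1) := by
      have := hexp (α - 1) (by linarith) z hz
      push_cast at this
      exact this
    have hB : ‖Complex.exp ((α:ℂ) * L z)‖ ≤ M ^ α := hexp α hα0.le z hz
    have hnα : ‖(α:ℂ)‖ = α := by
      rw [Complex.norm_real, Real.norm_eq_abs, abs_of_pos hα0]
    have hn1α : ‖(1 - (α:ℂ))‖ = α - 1 := by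
      have : (1 - (α:ℂ)) = ((1 - α : ℝ) : ℂ) := by push_cast; ring
      rw [this, Complex.norm_real, Real.norm_eq_abs, abs_of_neg (by linarith)]
      ring
    have hng : ‖deriv (fun w => f w * Complex.exp ((α:ℂ) * L w)) z‖
        ≤ α * M ^ (α - 1) * ‖deriv (fun w => f w * u w) z‖
          + (α - 1) * M ^ α * ‖deriv f z‖ := by
      rw [hderg z hz]
      refine le_trans (norm_add_le _ _) (add_le_add ?_ ?_)
      · rw [norm_mul, norm_mul, hnα]
        have h := mul_le_mul_of_nonneg_right hA (norm_nonneg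
          (deriv (fun w => f w * u w) z))
        calc α * ‖Complex.exp (((α:ℂ) - 1) * L z)‖ * ‖deriv (fun w => f w * u w) z‖
            ≤ α * (M ^ (α - 1) * ‖deriv (fun w => f w * u w) z‖) := by
              rw [mul_assoc]; exact mul_le_mul_of_nonneg_left h hα0.le
          _ = α * M ^ (α - 1) * ‖deriv (fun w => f w * u w) z‖ := by ring
      · rw [norm_mul, norm_mul, hn1α]
        have h := mul_le_mul_of_nonneg_right hB (norm_nonneg (deriv f z))
        calc (α - 1) * ‖Complex.exp ((α:ℂ) * L z)‖ * ‖deriv f z‖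
            ≤ (α - 1) * (M ^ α * ‖deriv f z‖) := by
              rw [mul_assoc]; exact mul_le_mul_of_nonneg_left h (by linarith)
          _ = (α - 1) * M ^ α * ‖deriv f z‖ := by ring
    calc (1 - ‖z‖ ^ 2) ^ β * ‖deriv (fun w => f w * Complex.exp ((α:ℂ) * L w)) z‖
        ≤ (1 - ‖z‖ ^ 2) ^ β * (α * M ^ (α - 1) * ‖deriv (fun w => f w * u w) z‖
            + (α - 1) * M ^ α * ‖deriv f z‖) := mul_le_mul_of_nonneg_left hng hw
      _ = α * M ^ (α - 1) * ((1 - ‖z‖ ^ 2) ^ β * ‖deriv (fun w => f w * u w) z‖)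
          + (α - 1) * M ^ α * ((1 - ‖z‖ ^ 2) ^ β * ‖deriv f z‖) := by ring
      _ ≤ α * M ^ (α - 1) * S1 + (α - 1) * M ^ α * S2 := by
          refine add_le_add ?_ ?_
          · exact mul_le_mul_of_nonneg_left (hS1le ⟨z, hz⟩)
              (mul_nonneg hα0.le hMα1)
          · exact mul_le_mul_of_nonneg_left (hS2le ⟨z, hz⟩)
              (mul_nonneg (by linarith) hMα)
  have hgbdd : BddAbove (Set.range fun z : Metric.ball (0:ℂ) 1 =>
      (1 - ‖(z:ℂ)‖ ^ 2) ^ β * ‖deriv (fun w => f w * Complex.exp ((α:ℂ) * L w)) (z:ℂ)‖) := by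
    refine ⟨α * M ^ (α - 1) * S1 + (α - 1) * M ^ α * S2, ?_⟩
    rintro x ⟨z, rfl⟩
    exact hC z
  have hgdiff : DifferentiableOn ℂ (fun z => f z * Complex.exp ((α:ℂ) * L z))
      (Metric.ball 0 1) := hf.1.mul ((hL.const_mul _).cexp)
  have hSg : blochSemi β (fun z => f z * Complex.exp ((α:ℂ) * L z))
      ≤ α * M ^ (α - 1) * S1 + (α - 1) * M ^ α * S2 := ciSup_le hC
  refine ⟨⟨hgdiff, hgbdd⟩, ?_⟩
  -- norm at 0
  have hg0 : ‖f 0 * Complex.exp ((α:ℂ) * L 0)‖ ≤ ‖f 0‖ * M ^ α := by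
    rw [norm_mul]
    exact mul_le_mul_of_nonneg_left (hexp α hα0.le 0 h0) (norm_nonneg _)
  simp only [blochNorm, ← hS1def, ← hS2def, ← hMdef]
  have hn1 : 0 ≤ M ^ α * S2 := mul_nonneg hMα hS2nn
  have hn2 : 0 ≤ α * (M ^ (α - 1) * ‖f 0 * u 0‖) :=
    mul_nonneg hα0.le (mul_nonneg hMα1 (norm_nonneg _))
  have hn3 : 0 ≤ (α - 1) * (M ^ α * ‖f 0‖) :=
    mul_nonneg (by linarith) (mul_nonneg hMα (norm_nonneg _))
  nlinarith [hSg, hg0]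
end

section
/- For real α > 2, a non-vanishing u ∈ H^∞(𝔻), and analytic f on 𝔻, one has the pointwise estimate |(u^α f)″(z)| ≤ C(α) [ ‖u‖_∞^{α−2} |(fu²)″(z)| + ‖u‖_∞^{α−1} |(fu)″(z)| + ‖u‖_∞^{α} |f″(z)| ] for all z ∈ 𝔻, where C(α) is a constant depending only on α. -/
open Complex

lemma aux_d2_stmt11 (f L : ℂ → ℂ) (s : Set ℂ) (hs : IsOpen s)
    (hf : DifferentiableOn ℂ f s) (hL : DifferentiableOn ℂ L s) (β : ℂ) (z : ℂ) (hz : z ∈ s) :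
    deriv (deriv (fun w => Complex.exp (β * L w) * f w)) z =
      Complex.exp (β * L z) *
        ((β * deriv (deriv L) z + β ^ 2 * deriv L z ^ 2) * f z
          + 2 * β * deriv L z * deriv f z + deriv (deriv f) z) := by
  have hfa := hf.analyticOnNhd hs
  have hLa := hL.analyticOnNhd hs
  have hf' : DifferentiableOn ℂ (deriv f) s := hfa.deriv.differentiableOn
  have hL' : DifferentiableOn ℂ (deriv L) s := hLa.deriv.differentiableOn
  have key : Set.EqOn (deriv (fun w => Complex.exp (β * L w) * f w))
      (fun w => Complex.exp (β * L w) * (β * deriv L w * f w + deriv f w)) s := by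
    intro w hw
    have hLw : HasDerivAt L (deriv L w) w := (hL.differentiableAt (hs.mem_nhds hw)).hasDerivAt
    have hfw : HasDerivAt f (deriv f w) w := (hf.differentiableAt (hs.mem_nhds hw)).hasDerivAt
    have h1 := (hLw.const_mul β).cexp.mul hfw
    rw [show deriv (fun w => Complex.exp (β * L w) * f w) w = _ from h1.deriv]; simp only; ring
  have hev := Filter.eventuallyEq_of_mem (hs.mem_nhds hz) key
  rw [hev.deriv_eq]
  have hLz : HasDerivAt L (deriv L z) z := (hL.differentiableAt (hs.mem_nhds hz)).hasDerivAt
  have hfz : HasDerivAt f (deriv f z) z := (hf.differentiableAt (hs.mem_nhds hz)).hasDerivAt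
  have hL'z : HasDerivAt (deriv L) (deriv (deriv L) z) z :=
    (hL'.differentiableAt (hs.mem_nhds hz)).hasDerivAt
  have hf'z : HasDerivAt (deriv f) (deriv (deriv f) z) z :=
    (hf'.differentiableAt (hs.mem_nhds hz)).hasDerivAt
  have h2 := (hLz.const_mul β).cexp.mul (((hL'z.const_mul β).mul hfz).add hf'z)
  rw [show deriv (fun w => Complex.exp (β * L w) * (β * deriv L w * f w + deriv f w)) z = _ from h2.deriv]
  simp only [Pi.mul_apply, Pi.add_apply]; ring

theorem stmt_11 (α : ℝ) (hα : 2 < α) :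
    ∃ C > 0, ∀ (f u L : ℂ → ℂ) (Mu : ℝ),
      DifferentiableOn ℂ f (Metric.ball 0 1) →
      DifferentiableOn ℂ u (Metric.ball 0 1) →
      (∀ z ∈ Metric.ball (0:ℂ) 1, u z ≠ 0) →
      DifferentiableOn ℂ L (Metric.ball 0 1) →
      (∀ z ∈ Metric.ball (0:ℂ) 1, Complex.exp (L z) = u z) →
      (∀ z ∈ Metric.ball (0:ℂ) 1, ‖u z‖ ≤ Mu) →
      ∀ z ∈ Metric.ball (0:ℂ) 1,
        ‖deriv (deriv (fun w => Complex.exp ((α : ℂ) * L w) * f w)) z‖ ≤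
          C * (Mu ^ (α - 2) * ‖deriv (deriv (fun w => f w * u w ^ 2)) z‖
              + Mu ^ (α - 1) * ‖deriv (deriv (fun w => f w * u w)) z‖
              + Mu ^ α * ‖deriv (deriv f) z‖) := by
  refine ⟨|α*(α-1)/2| + |α*(2-α)| + |(α-1)*(α-2)/2| + 1, by positivity, ?_⟩
  intro f u L Mu hf hu hune hL hexp hMu z hz
  set s := Metric.ball (0:ℂ) 1 with hsdef
  have hs : IsOpen s := Metric.isOpen_ball
  -- rewrite f*u^2 and f*u as exp-form
  have hq2 : Set.EqOn (fun w => f w * u w ^ 2) (fun w => Complex.exp ((2:ℂ) * L w) * f w) s := by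
    intro w hw
    have : u w = Complex.exp (L w) := (hexp w hw).symm
    simp only [this, two_mul, Complex.exp_add]; ring
  have hq1 : Set.EqOn (fun w => f w * u w) (fun w => Complex.exp ((1:ℂ) * L w) * f w) s := by
    intro w hw
    have : u w = Complex.exp (L w) := (hexp w hw).symm
    simp only [this, one_mul]; ring
  have hD2 : deriv (deriv (fun w => f w * u w ^ 2)) z
      = deriv (deriv (fun w => Complex.exp ((2:ℂ) * L w) * f w)) z :=
    ((Filter.eventuallyEq_of_mem (hs.mem_nhds hz) hq2).deriv).deriv_eq
  have hD1 : deriv (deriv (fun w => f w * u w)) z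
      = deriv (deriv (fun w => Complex.exp ((1:ℂ) * L w) * f w)) z :=
    ((Filter.eventuallyEq_of_mem (hs.mem_nhds hz) hq1).deriv).deriv_eq
  -- the key identity
  have hid : deriv (deriv (fun w => Complex.exp ((α:ℂ) * L w) * f w)) z
      = ((α*(α-1)/2 : ℝ) : ℂ) * Complex.exp (((α:ℂ) - 2) * L z)
          * deriv (deriv (fun w => Complex.exp ((2:ℂ) * L w) * f w)) z
        + ((α*(2-α) : ℝ) : ℂ) * Complex.exp (((α:ℂ) - 1) * L z)
          * deriv (deriv (fun w => Complex.exp ((1:ℂ) * L w) * f w)) z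
        + (((α-1)*(α-2)/2 : ℝ) : ℂ) * Complex.exp ((α:ℂ) * L z) * deriv (deriv f) z := by
    rw [aux_d2_stmt11 f L s hs hf hL ((α:ℂ)) z hz,
        aux_d2_stmt11 f L s hs hf hL 2 z hz,
        aux_d2_stmt11 f L s hs hf hL 1 z hz]
    have hg2 : Complex.exp ((2:ℂ) * L z) = Complex.exp (L z) * Complex.exp (L z) := by
      rw [← Complex.exp_add, two_mul]
    have hg1 : Complex.exp ((1:ℂ) * L z) = Complex.exp (L z) := by rw [one_mul]
    have hga : Complex.exp ((α:ℂ) * L z)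
        = Complex.exp (((α:ℂ) - 2) * L z) * (Complex.exp (L z) * Complex.exp (L z)) := by
      rw [← Complex.exp_add, ← Complex.exp_add]; congr 1; ring
    have hga1 : Complex.exp (((α:ℂ) - 1) * L z)
        = Complex.exp (((α:ℂ) - 2) * L z) * Complex.exp (L z) := by
      rw [← Complex.exp_add]; congr 1; ring
    rw [hg2, hg1, hga, hga1]
    push_cast
    ring
  -- norm of exp(γ L z)
  have hMu0 : (0:ℝ) ≤ Mu := le_trans (norm_nonneg _) (hMu z hz)
  have hnE : ∀ γ : ℝ, 0 ≤ γ → ‖Complex.exp ((γ:ℂ) * L z)‖ ≤ Mu ^ γ := by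
    intro γ hγ
    have hre : (((γ:ℂ)) * L z).re = γ * (L z).re := by
      simp [Complex.mul_re]
    have hnorm : ‖Complex.exp ((γ:ℂ) * L z)‖ = Real.exp (γ * (L z).re) := by
      rw [Complex.norm_exp, hre]
    have hu' : Real.exp ((L z).re) = ‖u z‖ := by
      rw [← hexp z hz, Complex.norm_exp]
    rw [hnorm]
    calc Real.exp (γ * (L z).re) = Real.exp ((L z).re) ^ γ := by
          rw [mul_comm, Real.exp_mul]
      _ = ‖u z‖ ^ γ := by rw [hu']
      _ ≤ Mu ^ γ := Real.rpow_le_rpow (norm_nonneg _) (hMu z hz) hγ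
  rw [hD2, hD1, hid]
  set D2 := deriv (deriv (fun w => Complex.exp ((2:ℂ) * L w) * f w)) z
  set D1 := deriv (deriv (fun w => Complex.exp ((1:ℂ) * L w) * f w)) z
  set D0 := deriv (deriv f) z
  have hEa2 : ‖Complex.exp (((α:ℂ) - 2) * L z)‖ ≤ Mu ^ (α - 2) := by
    have := hnE (α - 2) (by linarith)
    have hcast : (((α - 2 : ℝ)):ℂ) = (α:ℂ) - 2 := by push_cast; ring
    rwa [hcast] at this
  have hEa1 : ‖Complex.exp (((α:ℂ) - 1) * L z)‖ ≤ Mu ^ (α - 1) := by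
    have := hnE (α - 1) (by linarith)
    have hcast : (((α - 1 : ℝ)):ℂ) = (α:ℂ) - 1 := by push_cast; ring
    rwa [hcast] at this
  have hEa : ‖Complex.exp ((α:ℂ) * L z)‖ ≤ Mu ^ α := hnE α (by linarith)
  have hT1 : ‖((α*(α-1)/2 : ℝ) : ℂ) * Complex.exp (((α:ℂ) - 2) * L z) * D2‖
      ≤ |α*(α-1)/2| * (Mu ^ (α - 2) * ‖D2‖) := by
    rw [norm_mul, norm_mul, Complex.norm_real, Real.norm_eq_abs, mul_assoc]
    gcongr
  have hT2 : ‖((α*(2-α) : ℝ) : ℂ) * Complex.exp (((α:ℂ) - 1) * L z) * D1‖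
      ≤ |α*(2-α)| * (Mu ^ (α - 1) * ‖D1‖) := by
    rw [norm_mul, norm_mul, Complex.norm_real, Real.norm_eq_abs, mul_assoc]
    gcongr
  have hT3 : ‖(((α-1)*(α-2)/2 : ℝ) : ℂ) * Complex.exp ((α:ℂ) * L z) * D0‖
      ≤ |(α-1)*(α-2)/2| * (Mu ^ α * ‖D0‖) := by
    rw [norm_mul, norm_mul, Complex.norm_real, Real.norm_eq_abs, mul_assoc]
    gcongr
  have htri : ‖((α*(α-1)/2 : ℝ) : ℂ) * Complex.exp (((α:ℂ) - 2) * L z) * D2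
        + ((α*(2-α) : ℝ) : ℂ) * Complex.exp (((α:ℂ) - 1) * L z) * D1
        + (((α-1)*(α-2)/2 : ℝ) : ℂ) * Complex.exp ((α:ℂ) * L z) * D0‖
      ≤ ‖((α*(α-1)/2 : ℝ) : ℂ) * Complex.exp (((α:ℂ) - 2) * L z) * D2‖
        + ‖((α*(2-α) : ℝ) : ℂ) * Complex.exp (((α:ℂ) - 1) * L z) * D1‖
        + ‖(((α-1)*(α-2)/2 : ℝ) : ℂ) * Complex.exp ((α:ℂ) * L z) * D0‖ :=
    norm_add₃_le
  have hS1 : (0:ℝ) ≤ Mu ^ (α - 2) * ‖D2‖ :=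
    mul_nonneg (Real.rpow_nonneg hMu0 _) (norm_nonneg _)
  have hS2 : (0:ℝ) ≤ Mu ^ (α - 1) * ‖D1‖ :=
    mul_nonneg (Real.rpow_nonneg hMu0 _) (norm_nonneg _)
  have hS3 : (0:ℝ) ≤ Mu ^ α * ‖D0‖ :=
    mul_nonneg (Real.rpow_nonneg hMu0 _) (norm_nonneg _)
  have ha1 : (0:ℝ) ≤ |α*(α-1)/2| := abs_nonneg _
  have ha2 : (0:ℝ) ≤ |α*(2-α)| := abs_nonneg _
  have ha3 : (0:ℝ) ≤ |(α-1)*(α-2)/2| := abs_nonneg _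
  nlinarith [mul_nonneg ha1 hS2, mul_nonneg ha1 hS3, mul_nonneg ha2 hS1,
    mul_nonneg ha2 hS3, mul_nonneg ha3 hS1, mul_nonneg ha3 hS2]
end

section
/- Let X be a Banach space of analytic functions on a bounded domain Ω satisfying: point evaluations are bounded; 1 ∈ X; z·f ∈ X whenever f ∈ X; and the non-integer-power axiom (A4). If a bounded weighted composition operator W_{F,φ} f = F·(f∘φ) is surjective on X, then the composition symbol φ is injective on Ω. -/
theorem stmt_12 (Ω : Set ℂ) (hΩ : IsOpen Ω) (hconn : IsConnected Ω)
    (hbdd : Bornology.IsBounded Ω)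
    (X : Set (ℂ → ℂ)) (N : (ℂ → ℂ) → ℝ)
    -- X consists of analytic functions on Ω
    (hX : ∀ f ∈ X, DifferentiableOn ℂ f Ω)
    -- (A1): point evaluation functionals are bounded
    (hA1 : ∀ z ∈ Ω, ∃ C : ℝ, ∀ f ∈ X, ‖f z‖ ≤ C * N f)
    -- (A2): the constant function 1 belongs to X
    (hA2 : (fun _ : ℂ => (1 : ℂ)) ∈ X)
    -- (A3): multiplication by the identity function preserves X
    (hA3 : ∀ f ∈ X, (fun z => z * f z) ∈ X)
    -- (A4): the non-integer power axiom, with `u^α := exp (α · log u)`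
    (hA4 : ∀ u L : ℂ → ℂ, DifferentiableOn ℂ u Ω → DifferentiableOn ℂ L Ω →
      (∀ z ∈ Ω, Complex.exp (L z) = u z) → (∃ M : ℝ, ∀ z ∈ Ω, ‖u z‖ ≤ M) →
      ∀ f ∈ X, (∀ n : ℕ, 0 < n → (fun z => f z * u z ^ n) ∈ X) →
        ∃ α : ℝ, 0 < α ∧ (¬ ∃ k : ℤ, α = (k : ℝ)) ∧
          (fun z => f z * Complex.exp ((α : ℂ) * L z)) ∈ X)
    -- the symbols of the weighted composition operator
    (F φ : ℂ → ℂ) (hF : DifferentiableOn ℂ F Ω) (hφ : DifferentiableOn ℂ φ Ω)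
    (hmaps : Set.MapsTo φ Ω Ω)
    -- W_{F,φ} maps X into X and is bounded
    (hW : ∀ f ∈ X, (fun z => F z * f (φ z)) ∈ X)
    (hWbdd : ∃ C : ℝ, ∀ f ∈ X, N (fun z => F z * f (φ z)) ≤ C * N f)
    -- W_{F,φ} is surjective
    (hsurj : ∀ g ∈ X, ∃ f ∈ X, ∀ z ∈ Ω, F z * f (φ z) = g z) :
    Set.InjOn φ Ω := by
  obtain ⟨f₂, _, hf₂⟩ := hsurj _ hA2
  obtain ⟨f₁, _, hf₁⟩ := hsurj _ (hA3 _ hA2)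
  intro z₁ hz₁ z₂ hz₂ hφeq
  have h1 := hf₂ z₁ hz₁
  have h2 := hf₂ z₂ hz₂
  have h3 := hf₁ z₁ hz₁
  have h4 := hf₁ z₂ hz₂
  rw [hφeq] at h1 h3
  have hF2 : F z₂ ≠ 0 := by
    intro h; rw [h, zero_mul] at h2; exact one_ne_zero h2.symm
  have hF1 : F z₁ ≠ 0 := by
    intro h; rw [h, zero_mul] at h1; exact one_ne_zero h1.symm
  have hFeq : F z₁ = F z₂ := by
    have hfne : f₂ (φ z₂) ≠ 0 := by
      intro h; rw [h, mul_zero] at h2; exact one_ne_zero h2.symm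
    have := h1.trans h2.symm
    exact mul_right_cancel₀ hfne this
  have : z₁ * 1 = z₂ * 1 := by rw [← h3, ← h4, hFeq]
  simpa using this
end

section
/- Let X be a Banach space of analytic functions on the unit disk satisfying axioms (A1)–(A4) and whose norm is ‖f‖ = |f(0)| + p(f) for a translation-invariant seminorm p. If W_{F,φ} f = F·(f∘φ) is a surjective linear isometry of X, then φ(0) = 0. -/
theorem stmt_16
    (X : Set (ℂ → ℂ)) (p : (ℂ → ℂ) → ℝ) (N : (ℂ → ℂ) → ℝ)
    -- X consists of analytic functions on the unit disk
    (hX : ∀ f ∈ X, DifferentiableOn ℂ f (Metric.ball 0 1))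
    -- (A6): the norm is ‖f‖ = |f(0)| + p(f) with p a translation-invariant seminorm
    (hN : ∀ f, N f = ‖f 0‖ + p f)
    (hp0 : ∀ f, 0 ≤ p f)
    (hhom : ∀ (c : ℂ) (f : ℂ → ℂ), p (fun z => c * f z) = ‖c‖ * p f)
    (hpsub : ∀ f g : ℂ → ℂ, p (fun z => f z + g z) ≤ p f + p g)
    (htrans : ∀ (f : ℂ → ℂ) (C : ℂ), p (fun z => f z + C) = p f)
    -- (A1): point evaluation functionals are bounded
    (hA1 : ∀ z ∈ Metric.ball (0:ℂ) 1, ∃ C : ℝ, ∀ f ∈ X, ‖f z‖ ≤ C * N f)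
    -- (A2): the constant functions belong to X
    (hA2 : ∀ c : ℂ, (fun _ : ℂ => c) ∈ X)
    -- (A3): multiplication by the identity function preserves X
    (hA3 : ∀ f ∈ X, (fun z => z * f z) ∈ X)
    -- (A4): the non-integer power axiom, with `u^α := exp (α · log u)`
    (hA4 : ∀ u L : ℂ → ℂ, DifferentiableOn ℂ u (Metric.ball 0 1) →
      DifferentiableOn ℂ L (Metric.ball 0 1) →
      (∀ z ∈ Metric.ball (0:ℂ) 1, Complex.exp (L z) = u z) →
      (∃ M : ℝ, ∀ z ∈ Metric.ball (0:ℂ) 1, ‖u z‖ ≤ M) →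
      ∀ f ∈ X, (∀ n : ℕ, 0 < n → (fun z => f z * u z ^ n) ∈ X) →
        ∃ α : ℝ, 0 < α ∧ (¬ ∃ k : ℤ, α = (k : ℝ)) ∧
          (fun z => f z * Complex.exp ((α : ℂ) * L z)) ∈ X)
    -- X is closed under sums (it is a vector space)
    (hadd : ∀ f ∈ X, ∀ g ∈ X, (fun z => f z + g z) ∈ X)
    -- the symbols of the weighted composition operator
    (F φ : ℂ → ℂ) (hF : DifferentiableOn ℂ F (Metric.ball 0 1))
    (hφ : DifferentiableOn ℂ φ (Metric.ball 0 1))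
    (hmaps : Set.MapsTo φ (Metric.ball 0 1) (Metric.ball 0 1))
    -- W_{F,φ} maps X into X
    (hW : ∀ f ∈ X, (fun z => F z * f (φ z)) ∈ X)
    -- W_{F,φ} is surjective
    (hsurj : ∀ g ∈ X, ∃ f ∈ X, ∀ z ∈ Metric.ball (0:ℂ) 1, F z * f (φ z) = g z)
    -- W_{F,φ} is an isometry
    (hiso : ∀ f ∈ X, N (fun z => F z * f (φ z)) = N f) :
    φ 0 = 0 := by
  by_contra ha
  have p00 : p (fun _ : ℂ => (0:ℂ)) = 0 := by
    have h := hhom 0 (fun _ : ℂ => (0:ℂ))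
    simpa using h
  have pconst : ∀ c : ℂ, p (fun _ : ℂ => c) = 0 := by
    intro c
    have h := htrans (fun _ : ℂ => (0:ℂ)) c
    simpa [p00] using h
  -- |F 0| + p F = 1
  have key1 : ‖F 0‖ + p F = 1 := by
    have h := hiso (fun _ => (1:ℂ)) (hA2 1)
    have e1 : (fun z => F z * (1:ℂ)) = F := by funext z; ring
    rw [hN, hN] at h
    simp only [e1] at h
    simpa [pconst] using h
  have idmem : (fun z : ℂ => z) ∈ X := by
    have h := hA3 _ (hA2 1)
    simpa using h
  have hball0 : (0:ℂ) ∈ Metric.ball (0:ℂ) 1 := Metric.mem_ball_self one_pos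
  -- isometry on identity
  have h2 := hiso _ idmem
  rw [hN, hN] at h2
  -- h2 : |F 0 * φ 0| + p (F·φ) = |0| + p id
  have h2' : ‖F 0‖ * ‖φ 0‖ + p (fun z => F z * φ z)
      = p (fun z : ℂ => z) := by
    simpa [map_mul] using h2
  -- isometry on z ↦ z - φ 0
  have fmem : (fun z : ℂ => z + (-(φ 0))) ∈ X := hadd _ idmem _ (hA2 (-(φ 0)))
  have h3 := hiso _ fmem
  rw [hN, hN] at h3
  have h3' : p (fun z => F z * (φ z + -(φ 0)))
      = ‖φ 0‖ + p (fun z : ℂ => z) := by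
    have e2 : p (fun z : ℂ => z + -(φ 0)) = p (fun z : ℂ => z) :=
      htrans (fun z : ℂ => z) (-(φ 0))
    simpa [e2] using h3
  -- subadditivity bound
  have hsplit : (fun z => F z * (φ z + -(φ 0)))
      = fun z => (F z * φ z) + ((-(φ 0)) * F z) := by funext z; ring
  have hbound : p (fun z => F z * (φ z + -(φ 0)))
      ≤ p (fun z => F z * φ z) + ‖φ 0‖ * p F := by
    rw [hsplit]
    have h4 := hpsub (fun z => F z * φ z) (fun z => (-(φ 0)) * F z)
    have h5 : p (fun z => (-(φ 0)) * F z) = ‖φ 0‖ * p F := by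
      simpa using hhom (-(φ 0)) F
    linarith [h4, h5.le, h5.ge]
  have habs : 0 < ‖φ 0‖ := by
    simpa [norm_pos_iff] using ha
  have hF0 : ‖F 0‖ = 0 := by
    nlinarith [hp0 F, hp0 (fun z => F z * φ z), norm_nonneg (F 0)]
  have hF00 : F 0 = 0 := by
    simpa using (norm_eq_zero.mp hF0)
  -- surjectivity contradiction
  obtain ⟨g, hg, hgeq⟩ := hsurj (fun _ => (1:ℂ)) (hA2 1)
  have := hgeq 0 hball0
  rw [hF00] at this
  simp at this
end
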